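/- arXiv:2312.00676 — 2 statements merged into one kernel-verified Lean document; each statement's English description precedes it below -/
import Mathlib

section
/- Let F be a field with algebraic closure F̄. (i) If L ∈ F[λ]^{m×r} is such that the constant matrix L(λ₀) has full column rank r for all λ₀ ∈ F̄, then L can be factorized as L = L_c V, where L_c ∈ F[λ]^{m×r} is column reduced and L_c(λ₀) has full column rank r for all λ₀ ∈ F̄ (so the columns of L_c form a minimal basis of Col(L)), and V ∈ F[λ]^{r×r} is unimodular; hence the column degrees of L_c are the minimal indices of Col(L). (ii) If R ∈ F[λ]^{r×n} is such that R(λ₀) has full row rank r for all λ₀ ∈ F̄, then R can be factorized as R = U R_r, where R_r ∈ F[λ]^{r×n} is row reduced and R_r(λ₀) has full row rank r for all λ₀ ∈ F̄ (so the rows of R_r form a minimal basis of Row(R)), and U ∈ F[λ]^{r×r} is unimodular; hence the row degrees of R_r are the minimal indices of Row(R). -/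
open Polynomial Matrix

noncomputable section

variable {F : Type*} [Field F]

/-- The matrix over the field of rational functions associated with a polynomial matrix. -/
def toRat {m n : ℕ} (P : Matrix (Fin m) (Fin n) F[X]) : Matrix (Fin m) (Fin n) (RatFunc F) :=
  P.map (algebraMap F[X] (RatFunc F))

/-- The normal rank of a polynomial matrix: its rank over the field of rational functions. -/
def normalRank {m n : ℕ} (P : Matrix (Fin m) (Fin n) F[X]) : ℕ := (toRat P).rank

/-- The degree of a polynomial matrix: the maximum of the degrees of its entries,
`⊥` (i.e. -∞) for the zero matrix. -/
def matDeg {m n : ℕ} (P : Matrix (Fin m) (Fin n) F[X]) : WithBot ℕ :=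
  Finset.univ.sup fun i : Fin m => Finset.univ.sup fun j : Fin n => (P i j).degree

/-- Degree of the i-th row. -/
def rowDeg {m n : ℕ} (P : Matrix (Fin m) (Fin n) F[X]) (i : Fin m) : WithBot ℕ :=
  Finset.univ.sup fun j : Fin n => (P i j).degree

/-- Degree of the j-th column. -/
def colDeg {m n : ℕ} (P : Matrix (Fin m) (Fin n) F[X]) (j : Fin n) : WithBot ℕ :=
  Finset.univ.sup fun i : Fin m => (P i j).degree

/-- Degree of the i-th row as a natural number (0 for a zero row). -/
def rowDegNat {m n : ℕ} (P : Matrix (Fin m) (Fin n) F[X]) (i : Fin m) : ℕ :=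
  Finset.univ.sup fun j : Fin n => (P i j).natDegree

/-- Degree of the j-th column as a natural number (0 for a zero column). -/
def colDegNat {m n : ℕ} (P : Matrix (Fin m) (Fin n) F[X]) (j : Fin n) : ℕ :=
  Finset.univ.sup fun i : Fin m => (P i j).natDegree

/-- Highest-row-degree coefficient matrix. -/
def hrMatrix {m n : ℕ} (P : Matrix (Fin m) (Fin n) F[X]) : Matrix (Fin m) (Fin n) F :=
  Matrix.of fun i j => (P i j).coeff (rowDegNat P i)

/-- Highest-column-degree coefficient matrix. -/
def hcMatrix {m n : ℕ} (P : Matrix (Fin m) (Fin n) F[X]) : Matrix (Fin m) (Fin n) F :=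
  Matrix.of fun i j => (P i j).coeff (colDegNat P j)

/-- A polynomial matrix is row reduced if its highest-row-degree coefficient matrix has
full row rank. -/
def RowReduced {m n : ℕ} (P : Matrix (Fin m) (Fin n) F[X]) : Prop := (hrMatrix P).rank = m

/-- A polynomial matrix is column reduced if its highest-column-degree coefficient matrix has
full column rank. -/
def ColReduced {m n : ℕ} (P : Matrix (Fin m) (Fin n) F[X]) : Prop := (hcMatrix P).rank = n

/-- Evaluation of a polynomial matrix at a point of the algebraic closure. -/
def evalMat {m n : ℕ} (P : Matrix (Fin m) (Fin n) F[X]) (x : AlgebraicClosure F) :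
    Matrix (Fin m) (Fin n) (AlgebraicClosure F) :=
  Matrix.of fun i j => aeval x (P i j)

/-- The rows of `P` form a minimal basis of the rational subspace they span (Forney's
characterization): full row rank at every point of the algebraic closure, and row reduced. -/
def IsMinimalRowBasis {m n : ℕ} (P : Matrix (Fin m) (Fin n) F[X]) : Prop :=
  (∀ x : AlgebraicClosure F, (evalMat P x).rank = m) ∧ RowReduced P

/-- The columns of `P` form a minimal basis of the rational subspace they span. -/
def IsMinimalColBasis {m n : ℕ} (P : Matrix (Fin m) (Fin n) F[X]) : Prop :=
  (∀ x : AlgebraicClosure F, (evalMat P x).rank = n) ∧ ColReduced P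

/-- The column space Col(P) over the field of rational functions. -/
def colSpace {m n : ℕ} (P : Matrix (Fin m) (Fin n) F[X]) :
    Submodule (RatFunc F) (Fin m → RatFunc F) :=
  LinearMap.range (toRat P).mulVecLin

/-- The row space Row(P) over the field of rational functions. -/
def rowSpace {m n : ℕ} (P : Matrix (Fin m) (Fin n) F[X]) :
    Submodule (RatFunc F) (Fin n → RatFunc F) :=
  LinearMap.range (toRat P)ᵀ.mulVecLin

/-- The right nullspace N_r(P). -/
def rightNull {m n : ℕ} (P : Matrix (Fin m) (Fin n) F[X]) :
    Submodule (RatFunc F) (Fin n → RatFunc F) :=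
  LinearMap.ker (toRat P).mulVecLin

/-- The left nullspace N_ℓ(P). -/
def leftNull {m n : ℕ} (P : Matrix (Fin m) (Fin n) F[X]) :
    Submodule (RatFunc F) (Fin m → RatFunc F) :=
  LinearMap.ker (toRat P)ᵀ.mulVecLin
section Aux

lemma rank_eq_width_iff {K : Type*} [Field K] {m n : ℕ} (A : Matrix (Fin m) (Fin n) K) :
    A.rank = n ↔ LinearMap.ker A.mulVecLin = ⊥ := by
  have h := LinearMap.finrank_range_add_finrank_ker A.mulVecLin
  rw [Matrix.rank]
  constructor
  · intro hr
    rw [hr] at h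
    have h0 : Module.finrank K (LinearMap.ker A.mulVecLin) = 0 := by
      have hn : Module.finrank K (Fin n → K) = n := by simp
      omega
    exact Submodule.finrank_eq_zero.mp h0
  · intro hk
    rw [hk] at h
    simpa using h

lemma exists_mulVec_eq_zero_of_rank_ne {K : Type*} [Field K] {m n : ℕ}
    {A : Matrix (Fin m) (Fin n) K} (h : A.rank ≠ n) : ∃ v ≠ 0, A *ᵥ v = 0 := by
  have hk : LinearMap.ker A.mulVecLin ≠ ⊥ := fun hb => h ((rank_eq_width_iff A).mpr hb)
  obtain ⟨⟨v, hv⟩, hne⟩ := Submodule.nonzero_mem_of_bot_lt (Ne.bot_lt hk)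
  refine ⟨v, ?_, hv⟩
  simpa [Submodule.mk_eq_zero] using hne

lemma col_ne_zero_of_rank_eq_width {K : Type*} [Field K] {m n : ℕ}
    {A : Matrix (Fin m) (Fin n) K} (h : A.rank = n) (j : Fin n) :
    ∃ i, A i j ≠ 0 := by
  by_contra hc
  push_neg at hc
  have hker := (rank_eq_width_iff A).mp h
  have : (Pi.single j 1 : Fin n → K) ∈ LinearMap.ker A.mulVecLin := by
    simp only [LinearMap.mem_ker, Matrix.mulVecLin_apply, Matrix.mulVec_single]
    funext i; simp [hc i]
  rw [hker, Submodule.mem_bot] at this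
  have := congrFun this j
  simp at this

end Aux
section Step

variable {F : Type*} [Field F]

lemma toRat_mul {m n p : ℕ} (A : Matrix (Fin m) (Fin n) F[X]) (B : Matrix (Fin n) (Fin p) F[X]) :
    toRat (A * B) = toRat A * toRat B := by
  simp [toRat, Matrix.map_mul]

lemma colDegNat_entry_le {m r : ℕ} (L : Matrix (Fin m) (Fin r) F[X]) (i : Fin m) (k : Fin r) :
    (L i k).natDegree ≤ colDegNat L k :=
  Finset.le_sup (f := fun i => (L i k).natDegree) (Finset.mem_univ i)

lemma reduce_step {m r : ℕ} (L : Matrix (Fin m) (Fin r) F[X])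
    (hrank : (toRat L).rank = r) (hnc : ¬ ColReduced L) :
    ∃ E : Matrix (Fin r) (Fin r) F[X], IsUnit E.det ∧ (toRat (L * E)).rank = r ∧
      (∑ k, colDegNat (L * E) k) < ∑ k, colDegNat L k := by
  classical
  obtain ⟨v, hv0, hv⟩ := exists_mulVec_eq_zero_of_rank_ne hnc
  set d : Fin r → ℕ := colDegNat L with hd
  -- choose j maximizing d over the support of v
  have hsne : (Finset.univ.filter fun k => v k ≠ 0).Nonempty := by
    obtain ⟨k, hk⟩ := Function.ne_iff.mp hv0
    exact ⟨k, by simpa using hk⟩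
  obtain ⟨j, hjmem, hjmax⟩ := Finset.exists_max_image _ d hsne
  have hvj : v j ≠ 0 := by simpa using hjmem
  have hmax : ∀ k, v k ≠ 0 → d k ≤ d j := fun k hk => hjmax k (by simp [hk])
  set w : Fin r → F[X] := fun k => Polynomial.C (v k) * Polynomial.X ^ (d j - d k) with hw
  set E : Matrix (Fin r) (Fin r) F[X] := (1 : Matrix (Fin r) (Fin r) F[X]).updateCol j w
    with hE
  have hdet : E.det = Polynomial.C (v j) := by
    rw [hE, ← Matrix.cramer_apply, Matrix.cramer_one]
    simp [hw]
  have hUdet : IsUnit E.det := by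
    rw [hdet]; exact Polynomial.isUnit_C.mpr (isUnit_iff_ne_zero.mpr hvj)
  have hr' : (toRat (L * E)).rank = r := by
    rw [toRat_mul]
    have hu : IsUnit (toRat E).det := by
      rw [toRat, ← RingHom.mapMatrix_apply, ← RingHom.map_det]
      exact hUdet.map (algebraMap F[X] (RatFunc F))
    rw [Matrix.rank_mul_eq_left_of_isUnit_det _ _ hu, hrank]
  refine ⟨E, hUdet, hr', ?_⟩
  -- entries of L * E
  have hmul : ∀ i k, (L * E) i k = if k = j then ∑ t, L i t * w t else L i k := by
    intro i k
    rw [Matrix.mul_apply]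
    by_cases hk : k = j
    · subst hk; simp [hE, Matrix.updateCol_apply]
    · simp [hE, Matrix.updateCol_apply, hk, Matrix.one_apply, mul_ite, mul_one, mul_zero]
  have hdeg_entry : ∀ (i : Fin m) (t : Fin r), (L i t).natDegree ≤ d t :=
    fun i t => colDegNat_entry_le L i t
  have key : ∀ (i : Fin m) (n : ℕ), d j ≤ n → ((L * E) i j).coeff n = 0 := by
    intro i n hn
    rw [hmul, if_pos rfl, Polynomial.finset_sum_coeff]
    have hterm : ∀ t, (L i t * w t).coeff n = (L i t).coeff (n - d j + d t) * v t := by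
      intro t
      by_cases hvt : v t = 0
      · simp [hw, hvt]
      · have hdt : d t ≤ d j := hmax t hvt
        have hre : L i t * w t = (L i t * Polynomial.C (v t)) * Polynomial.X ^ (d j - d t) := by
          rw [hw]; ring
        rw [hre, Polynomial.coeff_mul_X_pow', if_pos (le_trans (Nat.sub_le _ _) hn),
          Polynomial.coeff_mul_C]
        congr 2
        omega
    rw [Finset.sum_congr rfl fun t _ => hterm t]
    rcases eq_or_lt_of_le hn with heq | hlt
    · have hidx : ∀ t : Fin r, (L i t).coeff (n - d j + d t) = hcMatrix L i t := by
        intro t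
        have hnd : n - d j + d t = d t := by omega
        rw [hnd]
        rfl
      rw [Finset.sum_congr rfl fun t _ => by rw [hidx t]]
      have := congrFun hv i
      simpa [Matrix.mulVec, dotProduct] using this
    · refine Finset.sum_eq_zero fun t _ => ?_
      rw [Polynomial.coeff_eq_zero_of_natDegree_lt, zero_mul]
      have := hdeg_entry i t
      omega
  obtain ⟨i0, hi0⟩ := col_ne_zero_of_rank_eq_width hr' j
  have hcolne : (L * E) i0 j ≠ 0 := by
    intro h0
    apply hi0
    simp [toRat, Matrix.map_apply, h0]
  have hdlt : ∀ i, ((L * E) i j).degree < (d j : WithBot ℕ) :=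
    fun i => (Polynomial.degree_lt_iff_coeff_zero _ _).mpr fun n hn => key i n hn
  have hdj1 : 1 ≤ d j := by
    have h0 : (0 : WithBot ℕ) ≤ ((L * E) i0 j).degree :=
      Polynomial.zero_le_degree_iff.mpr hcolne
    have hlt := lt_of_le_of_lt h0 (hdlt i0)
    exact_mod_cast hlt
  have hnewdeg : colDegNat (L * E) j ≤ d j - 1 := by
    apply Finset.sup_le
    intro i _
    by_cases h0 : (L * E) i j = 0
    · simp [h0]
    · have := (Polynomial.natDegree_lt_iff_degree_lt h0).mpr (hdlt i)
      omega
  have hsame : ∀ k, k ≠ j → colDegNat (L * E) k = colDegNat L k := by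
    intro k hk
    exact Finset.sup_congr rfl fun i _ => by rw [hmul, if_neg hk]
  refine Finset.sum_lt_sum (fun k _ => ?_) ⟨j, Finset.mem_univ j, ?_⟩
  · by_cases hk : k = j
    · subst hk
      have : colDegNat L k = d k := rfl
      omega
    · rw [hsame k hk]
  · have : colDegNat L j = d j := rfl
    omega

end Step
section Reduce

variable {F : Type*} [Field F]

lemma col_reduce_aux {m r : ℕ} : ∀ (N : ℕ) (L : Matrix (Fin m) (Fin r) F[X]),
    (∑ k, colDegNat L k) ≤ N → (toRat L).rank = r →
    ∃ (Lc : Matrix (Fin m) (Fin r) F[X]) (V : Matrix (Fin r) (Fin r) F[X]),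
      L = Lc * V ∧ ColReduced Lc ∧ IsUnit V.det := by
  intro N
  induction N using Nat.strong_induction_on with
  | _ N IH =>
    intro L hle hrank
    by_cases hcr : ColReduced L
    · exact ⟨L, 1, by simp, hcr, by simp⟩
    · obtain ⟨E, hEdet, hrank', hlt⟩ := reduce_step L hrank hcr
      obtain ⟨Lc, V, hfac, hLc, hV⟩ :=
        IH (∑ k, colDegNat (L * E) k) (lt_of_lt_of_le hlt hle) (L * E) le_rfl hrank'
      have hEu : IsUnit E := (Matrix.isUnit_iff_isUnit_det E).mpr hEdet
      obtain ⟨u, hu⟩ := hEu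
      refine ⟨Lc, V * (↑u⁻¹ : Matrix (Fin r) (Fin r) F[X]), ?_, hLc, ?_⟩
      · calc L = L * E * (↑u⁻¹ : Matrix (Fin r) (Fin r) F[X]) := by
              rw [Matrix.mul_assoc, ← hu]
              simp
          _ = Lc * V * (↑u⁻¹ : Matrix (Fin r) (Fin r) F[X]) := by rw [hfac]
          _ = Lc * (V * (↑u⁻¹ : Matrix (Fin r) (Fin r) F[X])) := by rw [Matrix.mul_assoc]
      · rw [Matrix.det_mul]
        exact hV.mul ((Matrix.isUnit_iff_isUnit_det _).mp u⁻¹.isUnit)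

end Reduce
section NormalRank

variable {F : Type*} [Field F]

lemma rank_toRat_of_eval {m r : ℕ} (L : Matrix (Fin m) (Fin r) F[X])
    (h : ∀ x : AlgebraicClosure F, (evalMat L x).rank = r) : (toRat L).rank = r := by
  classical
  rw [rank_eq_width_iff]
  rw [Submodule.eq_bot_iff]
  intro v hv
  by_contra hv0
  rw [LinearMap.mem_ker, Matrix.mulVecLin_apply] at hv
  -- clear denominators
  obtain ⟨b, hb⟩ := IsLocalization.exist_integer_multiples
    (nonZeroDivisors F[X]) Finset.univ v
  choose w hw using fun i => hb i (Finset.mem_univ i)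
  have hbne : algebraMap F[X] (RatFunc F) (b : F[X]) ≠ 0 := by
    intro h0
    exact nonZeroDivisors.coe_ne_zero b
      ((map_eq_zero_iff _ (IsFractionRing.injective F[X] (RatFunc F))).mp h0)
  have hw0 : ∃ j0, w j0 ≠ 0 := by
    by_contra hall
    push_neg at hall
    apply hv0
    funext i
    have := hw i
    rw [hall i, map_zero, Algebra.smul_def] at this
    have := (mul_eq_zero.mp this.symm).resolve_left hbne
    simpa using this
  obtain ⟨j0, hj0⟩ := hw0
  have hLw : L *ᵥ w = 0 := by
    funext i
    apply IsFractionRing.injective F[X] (RatFunc F)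
    simp only [Pi.zero_apply, map_zero]
    have : algebraMap F[X] (RatFunc F) ((L *ᵥ w) i)
        = algebraMap F[X] (RatFunc F) (b : F[X]) * ((toRat L *ᵥ v) i) := by
      simp only [Matrix.mulVec, dotProduct, map_sum, _root_.map_mul, Finset.mul_sum]
      refine Finset.sum_congr rfl fun k _ => ?_
      rw [hw k, Algebra.smul_def, toRat, Matrix.map_apply]
      ring
    rw [this, hv]
    simp
  -- choose a point where w j0 does not vanish
  set q : Polynomial (AlgebraicClosure F) :=
    (w j0).map (algebraMap F (AlgebraicClosure F)) with hq
  have hqne : q ≠ 0 := Polynomial.map_ne_zero hj0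
  obtain ⟨x, hx⟩ : ∃ x, q.eval x ≠ 0 := by
    by_contra hall
    push_neg at hall
    exact hqne (Polynomial.zero_of_eval_zero q hall)
  set u : Fin r → AlgebraicClosure F := fun k => Polynomial.aeval x (w k) with hu
  have hu0 : u j0 ≠ 0 := by
    have he : (Polynomial.aeval x) (w j0) = q.eval x := by
      rw [Polynomial.aeval_def, hq, Polynomial.eval_map]
    rw [hu]
    simpa [he] using hx
  have heval : evalMat L x *ᵥ u = 0 := by
    funext i
    have := congrFun hLw i
    simp only [Matrix.mulVec, dotProduct, Pi.zero_apply] at this ⊢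
    calc ∑ k, evalMat L x i k * u k = Polynomial.aeval x (∑ k, L i k * w k) := by
          rw [map_sum]
          exact Finset.sum_congr rfl fun k _ => by rw [_root_.map_mul]; rfl
      _ = 0 := by rw [this, map_zero]
  have hker := (rank_eq_width_iff (evalMat L x)).mp (h x)
  have : u ∈ LinearMap.ker (evalMat L x).mulVecLin := by
    rw [LinearMap.mem_ker, Matrix.mulVecLin_apply, heval]
  rw [hker, Submodule.mem_bot] at this
  exact hu0 (by rw [this]; rfl)

end NormalRank
/-- A polynomial matrix with full column (resp. row) rank at every point of the algebraic
closure factors as a minimal basis times (resp. a unimodular matrix times) a unimodular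
matrix; in F[X] unimodular means the determinant is a unit, i.e. a nonzero constant. -/
theorem minimal_basis_unimodular_factorization
    {F : Type*} [Field F] :
    (∀ (m r : ℕ) (L : Matrix (Fin m) (Fin r) F[X]),
      (∀ x : AlgebraicClosure F, (evalMat L x).rank = r) →
      ∃ (Lc : Matrix (Fin m) (Fin r) F[X]) (V : Matrix (Fin r) (Fin r) F[X]),
        L = Lc * V ∧ IsMinimalColBasis Lc ∧ colSpace Lc = colSpace L ∧ IsUnit V.det) ∧
    (∀ (r n : ℕ) (R : Matrix (Fin r) (Fin n) F[X]),
      (∀ x : AlgebraicClosure F, (evalMat R x).rank = r) →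
      ∃ (U : Matrix (Fin r) (Fin r) F[X]) (Rr : Matrix (Fin r) (Fin n) F[X]),
        R = U * Rr ∧ IsMinimalRowBasis Rr ∧ rowSpace Rr = rowSpace R ∧ IsUnit U.det) := by
  have part1 : ∀ (m r : ℕ) (L : Matrix (Fin m) (Fin r) F[X]),
      (∀ x : AlgebraicClosure F, (evalMat L x).rank = r) →
      ∃ (Lc : Matrix (Fin m) (Fin r) F[X]) (V : Matrix (Fin r) (Fin r) F[X]),
        L = Lc * V ∧ IsMinimalColBasis Lc ∧ colSpace Lc = colSpace L ∧ IsUnit V.det := by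
    intro m r L hL
    have hrank := rank_toRat_of_eval L hL
    obtain ⟨Lc, V, hfac, hcr, hV⟩ := col_reduce_aux (∑ k, colDegNat L k) L le_rfl hrank
    refine ⟨Lc, V, hfac, ⟨?_, hcr⟩, ?_, hV⟩
    · intro x
      have hEq : evalMat L x = evalMat Lc x * evalMat V x := by
        rw [hfac]
        ext i k
        simp [evalMat, Matrix.mul_apply, map_sum, _root_.map_mul]
      have hdet : IsUnit (evalMat V x).det := by
        have h1 : evalMat V x
            = ((Polynomial.aeval x : F[X] →ₐ[F] AlgebraicClosure F) :
                F[X] →+* AlgebraicClosure F).mapMatrix V := rfl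
        rw [h1, ← RingHom.map_det]
        exact hV.map _
      have := hL x
      rwa [hEq, Matrix.rank_mul_eq_left_of_isUnit_det _ _ hdet] at this
    · rw [hfac]
      unfold colSpace
      rw [toRat_mul, Matrix.mulVecLin_mul]
      have hdet : IsUnit (toRat V).det := by
        rw [toRat, ← RingHom.mapMatrix_apply, ← RingHom.map_det]
        exact hV.map _
      have htop : LinearMap.range (toRat V).mulVecLin = ⊤ := by
        rw [LinearMap.range_eq_top]
        intro y
        exact ⟨(toRat V)⁻¹ *ᵥ y, by
          simp [Matrix.mulVecLin_apply, Matrix.mulVec_mulVec,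
            Matrix.mul_nonsing_inv _ hdet]⟩
      rw [LinearMap.range_comp_of_range_eq_top _ htop]
  refine ⟨part1, ?_⟩
  intro r n R hR
  have hRT : ∀ x : AlgebraicClosure F, (evalMat Rᵀ x).rank = r := by
    intro x
    have h1 : evalMat Rᵀ x = (evalMat R x)ᵀ := rfl
    rw [h1, Matrix.rank_transpose]
    exact hR x
  obtain ⟨Lc, V, hfac, ⟨hmin, hcr⟩, hcs, hV⟩ := part1 n r Rᵀ hRT
  refine ⟨Vᵀ, Lcᵀ, ?_, ⟨?_, ?_⟩, ?_, ?_⟩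
  · have h2 := congrArg Matrix.transpose hfac
    rwa [Matrix.transpose_transpose, Matrix.transpose_mul] at h2
  · intro x
    have h1 : evalMat Lcᵀ x = (evalMat Lc x)ᵀ := rfl
    rw [h1, Matrix.rank_transpose]
    exact hmin x
  · unfold RowReduced
    have h2 : hrMatrix Lcᵀ = (hcMatrix Lc)ᵀ := rfl
    rw [h2, Matrix.rank_transpose]
    exact hcr
  · unfold rowSpace
    have h3 : (toRat Lcᵀ)ᵀ = toRat Lc := rfl
    have h4 : (toRat R)ᵀ = toRat Rᵀ := rfl
    rw [h3, h4]
    exact hcs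
  · rw [Matrix.det_transpose]
    exact hV
end
end

section
/- Let F be a field with algebraic closure F̄ and let P ∈ F[λ]^{m×n} have normal rank r > 0, degree exactly d, no finite eigenvalues (rank P(λ₀) = r for all λ₀ ∈ F̄), and no eigenvalue at infinity with respect to grade d (the matrix of coefficients of λ^d of the entries of P has rank r). Then: (i) if P = L E R with L ∈ F[λ]^{m×r} whose columns form a minimal basis of Col(P), R ∈ F[λ]^{r×n} whose rows form a minimal basis of Row(P), and E ∈ F[λ]^{r×r}, then the rows of E R form a minimal basis of Row(P), the columns of L E form a minimal basis of Col(P), and deg(L_{*i}) + deg((ER)_{i*}) = deg((LE)_{*i}) + deg(R_{i*}) = d for i = 1,…,r; (ii) if P = L R with L ∈ F[λ]^{m×r} whose columns form a minimal basis of Col(P) and R ∈ F[λ]^{r×n}, then the rows of R form a minimal basis of Row(P) and deg(L_{*i}) + deg(R_{i*}) = d for i = 1,…,r; (iii) if P = L R with R ∈ F[λ]^{r×n} whose rows form a minimal basis of Row(P) and L ∈ F[λ]^{m×r}, then the columns of L form a minimal basis of Col(P) and deg(L_{*i}) + deg(R_{i*}) = d for i = 1,…,r. -/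
open Polynomial Matrix

noncomputable section

variable {F : Type*} [Field F]

lemma aux_inj {m k : ℕ} (A : Matrix (Fin m) (Fin k) F) (h : A.rank = k) :
    Function.Injective A.mulVecLin := by
  rw [← LinearMap.ker_eq_bot]
  have h2 := LinearMap.finrank_range_add_finrank_ker A.mulVecLin
  rw [show Module.finrank F (LinearMap.range A.mulVecLin) = k from h] at h2
  simp only [Module.finrank_pi, Fintype.card_fin] at h2
  have : Module.finrank F (LinearMap.ker A.mulVecLin) = 0 := by omega
  exact Submodule.finrank_eq_zero.mp this

lemma aux_col_ne_zero {m k : ℕ} (A : Matrix (Fin m) (Fin k) F) (h : A.rank = k) (j : Fin k) :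
    ∃ i, A i j ≠ 0 := by
  by_contra hc
  push_neg at hc
  have h0 : A.mulVecLin (Pi.single j 1) = A.mulVecLin 0 := by
    simp only [mulVecLin_apply, Matrix.mulVec_single, mulVec_zero]
    funext i; simp [hc i]
  have := aux_inj A h h0
  have := congrFun this j
  simp at this

lemma aux_coeff_mul (p q : F[X]) (a b N : ℕ) (hp : p.natDegree ≤ a)
    (hq : q.natDegree ≤ b) (h : a + b ≤ N) :
    (p * q).coeff N = if a + b = N then p.coeff a * q.coeff b else 0 := by
  rw [coeff_mul]
  by_cases he : a + b = N
  · rw [if_pos he]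
    apply Finset.sum_eq_single_of_mem (a, b)
    · simp [Finset.mem_antidiagonal, he]
    · rintro ⟨s, t⟩ hst hne
      simp only [Finset.HasAntidiagonal.mem_antidiagonal] at hst
      rcases lt_or_ge a s with hs | hs
      · rw [coeff_eq_zero_of_natDegree_lt (lt_of_le_of_lt hp hs), zero_mul]
      · have : b < t ∨ (s = a ∧ t = b) := by omega
        rcases this with ht | ⟨rfl, rfl⟩
        · rw [coeff_eq_zero_of_natDegree_lt (lt_of_le_of_lt hq ht), mul_zero]
        · exact absurd rfl hne
  · rw [if_neg he]
    apply Finset.sum_eq_zero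
    rintro ⟨s, t⟩ hst
    simp only [Finset.HasAntidiagonal.mem_antidiagonal] at hst
    rcases lt_or_ge a s with hs | hs
    · rw [coeff_eq_zero_of_natDegree_lt (lt_of_le_of_lt hp hs), zero_mul]
    · have : b < t := by omega
      rw [coeff_eq_zero_of_natDegree_lt (lt_of_le_of_lt hq this), mul_zero]


-- row lemma: nonzero row attains its natDegree sup with nonzero coeff
lemma aux_row_coeff {n : ℕ} (v : Fin n → F[X]) (hv : ∃ j, v j ≠ 0) :
    ∃ j, (v j).coeff (Finset.univ.sup fun j => (v j).natDegree) ≠ 0 ∧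
      (v j).degree = ((Finset.univ.sup fun j => (v j).natDegree : ℕ) : WithBot ℕ) := by
  obtain ⟨j0, hj0⟩ := hv
  set s := Finset.univ.sup fun j => (v j).natDegree with hs
  have hne : (Finset.univ : Finset (Fin n)).Nonempty := ⟨j0, Finset.mem_univ _⟩
  obtain ⟨j1, -, hj1⟩ := Finset.exists_mem_eq_sup Finset.univ hne fun j => (v j).natDegree
  by_cases h1 : v j1 = 0
  · have hs0 : s = 0 := by rw [hs, hj1, h1, natDegree_zero]
    refine ⟨j0, ?_, ?_⟩
    · rw [hs0]
      intro hc
      have : (v j0).natDegree = 0 := le_antisymm (hs0 ▸ hs ▸ Finset.le_sup (f := fun j => (v j).natDegree) (Finset.mem_univ j0)) (Nat.zero_le _)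
      obtain ⟨a, ha⟩ : ∃ a, v j0 = C a := ⟨_, (eq_C_of_natDegree_eq_zero this)⟩
      rw [ha] at hc hj0
      simp at hc
      simp [hc] at hj0
    · rw [hs0]
      have : (v j0).natDegree = 0 := le_antisymm (hs0 ▸ hs ▸ Finset.le_sup (f := fun j => (v j).natDegree) (Finset.mem_univ j0)) (Nat.zero_le _)
      rw [degree_eq_natDegree hj0, this]
  · refine ⟨j1, ?_, ?_⟩
    · rw [hs, hj1]
      exact mt leadingCoeff_eq_zero.mp h1
    · rw [degree_eq_natDegree h1, hs, hj1]

lemma aux_toRat_mul {m k n : ℕ} (A : Matrix (Fin m) (Fin k) F[X]) (B : Matrix (Fin k) (Fin n) F[X]) :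
    toRat (A * B) = toRat A * toRat B := by
  unfold toRat
  exact Matrix.map_mul

lemma aux_evalMat_mul {m k n : ℕ} (A : Matrix (Fin m) (Fin k) F[X]) (B : Matrix (Fin k) (Fin n) F[X])
    (x : AlgebraicClosure F) : evalMat (A * B) x = evalMat A x * evalMat B x := by
  ext i j
  simp [evalMat, Matrix.mul_apply, map_sum]

lemma aux_toRat_transpose {m n : ℕ} (A : Matrix (Fin m) (Fin n) F[X]) :
    toRat Aᵀ = (toRat A)ᵀ := rfl

lemma aux_evalMat_transpose {m n : ℕ} (A : Matrix (Fin m) (Fin n) F[X]) (x : AlgebraicClosure F) :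
    evalMat Aᵀ x = (evalMat A x)ᵀ := rfl

lemma aux_rowSpace_transpose {m n : ℕ} (A : Matrix (Fin m) (Fin n) F[X]) :
    rowSpace A = colSpace Aᵀ := rfl

lemma aux_colSpace_transpose {m n : ℕ} (A : Matrix (Fin m) (Fin n) F[X]) :
    colSpace A = rowSpace Aᵀ := by
  unfold colSpace rowSpace
  rw [aux_toRat_transpose, Matrix.transpose_transpose]

lemma aux_hc_transpose {m n : ℕ} (A : Matrix (Fin m) (Fin n) F[X]) :
    hcMatrix Aᵀ = (hrMatrix A)ᵀ := rfl

lemma aux_minRow_transpose {m n : ℕ} (A : Matrix (Fin m) (Fin n) F[X]) :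
    IsMinimalColBasis Aᵀ ↔ IsMinimalRowBasis A := by
  unfold IsMinimalColBasis IsMinimalRowBasis ColReduced RowReduced
  rw [aux_hc_transpose, Matrix.rank_transpose]
  constructor
  · rintro ⟨h1, h2⟩
    exact ⟨fun x => by rw [← Matrix.rank_transpose, ← aux_evalMat_transpose]; exact h1 x, h2⟩
  · rintro ⟨h1, h2⟩
    exact ⟨fun x => by rw [aux_evalMat_transpose, Matrix.rank_transpose]; exact h1 x, h2⟩

lemma aux_rowDeg_transpose {m n : ℕ} (A : Matrix (Fin m) (Fin n) F[X]) (i : Fin m) :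
    rowDeg A i = colDeg Aᵀ i := rfl

lemma aux_colDeg_transpose {m n : ℕ} (A : Matrix (Fin m) (Fin n) F[X]) (j : Fin n) :
    colDeg A j = rowDeg Aᵀ j := rfl

lemma aux_matDeg_transpose {m n : ℕ} (A : Matrix (Fin m) (Fin n) F[X]) :
    matDeg Aᵀ = matDeg A := by
  unfold matDeg
  rw [Finset.sup_comm]
  rfl

lemma aux_normalRank_transpose {m n : ℕ} (A : Matrix (Fin m) (Fin n) F[X]) :
    normalRank Aᵀ = normalRank A := by
  unfold normalRank
  rw [aux_toRat_transpose, Matrix.rank_transpose]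

lemma aux_partII {m n r d : ℕ}
    (P : Matrix (Fin m) (Fin n) F[X])
    (hdeg : ∀ i j, (P i j).degree ≤ (d : WithBot ℕ))
    (hrank : normalRank P = r) (hr0 : 0 < r)
    (hfin : ∀ x : AlgebraicClosure F, (evalMat P x).rank = r)
    (hinf : (Matrix.of (fun (i : Fin m) (j : Fin n) => (P i j).coeff d) :
        Matrix (Fin m) (Fin n) F).rank = r)
    (L : Matrix (Fin m) (Fin r) F[X]) (R : Matrix (Fin r) (Fin n) F[X])
    (hP : P = L * R)
    (hL : IsMinimalColBasis L) :
    IsMinimalRowBasis R ∧ rowSpace R = rowSpace P ∧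
    ∀ i : Fin r, colDeg L i + rowDeg R i = (d : WithBot ℕ) := by
  classical
  obtain ⟨hLx, hLred⟩ := hL
  have x0 : AlgebraicClosure F := 0
  -- Step A : full row rank of R at every point
  have hRx : ∀ x : AlgebraicClosure F, (evalMat R x).rank = r := by
    intro x
    refine le_antisymm (Matrix.rank_le_height _) ?_
    have h1 : evalMat P x = evalMat L x * evalMat R x := by rw [hP, aux_evalMat_mul]
    calc r = (evalMat P x).rank := (hfin x).symm
      _ ≤ (evalMat R x).rank := by rw [h1]; exact Matrix.rank_mul_le_right _ _
  -- rows of R are nonzero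
  have hrow : ∀ i : Fin r, ∃ j, R i j ≠ 0 := by
    intro i
    have h1 : ((evalMat R x0)ᵀ).rank = r := by rw [Matrix.rank_transpose]; exact hRx x0
    obtain ⟨j, hj⟩ := aux_col_ne_zero ((evalMat R x0)ᵀ) h1 i
    exact ⟨j, fun hc => hj (by simp [evalMat, Matrix.transpose_apply, hc])⟩
  -- columns of L are nonzero
  have hcol : ∀ i : Fin r, ∃ a, L a i ≠ 0 := by
    intro i
    obtain ⟨a, ha⟩ := aux_col_ne_zero (evalMat L x0) (hLx x0) i
    exact ⟨a, fun hc => ha (by simp [evalMat, hc])⟩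
  set dN : Fin r → ℕ := colDegNat L with hdN
  set eN : Fin r → ℕ := rowDegNat R with heN
  -- witnesses for leading coefficients
  have hRlead : ∀ i : Fin r, ∃ j, (R i j).coeff (eN i) ≠ 0 ∧
      (R i j).degree = ((eN i : ℕ) : WithBot ℕ) := fun i => aux_row_coeff (fun j => R i j) (hrow i)
  have hLlead : ∀ i : Fin r, ∃ a, (L a i).coeff (dN i) ≠ 0 ∧
      (L a i).degree = ((dN i : ℕ) : WithBot ℕ) := fun i => aux_row_coeff (fun a => L a i) (hcol i)
  -- degree bounds
  have hdL : ∀ a (i : Fin r), (L a i).natDegree ≤ dN i :=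
    fun a i => Finset.le_sup (f := fun a => (L a i).natDegree) (Finset.mem_univ a)
  have hdR : ∀ (i : Fin r) b, (R i b).natDegree ≤ eN i :=
    fun i b => Finset.le_sup (f := fun b => (R i b).natDegree) (Finset.mem_univ b)
  -- the key coefficient identity
  have key : ∀ N : ℕ, (∀ i, dN i + eN i ≤ N) →
      (Matrix.of (fun a b => (P a b).coeff N) : Matrix (Fin m) (Fin n) F) =
      hcMatrix L * Matrix.diagonal (fun i => if dN i + eN i = N then (1:F) else 0) * hrMatrix R := by
    intro N hN
    ext a b
    rw [Matrix.mul_assoc, Matrix.of_apply, hP, Matrix.mul_apply, finset_sum_coeff,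
      Matrix.mul_apply]
    refine Finset.sum_congr rfl fun i _ => ?_
    rw [aux_coeff_mul (L a i) (R i b) (dN i) (eN i) N (hdL a i) (hdR i b) (hN i),
      Matrix.mul_apply, Finset.sum_eq_single i]
    · simp only [Matrix.diagonal_apply_eq, hcMatrix, hrMatrix, Matrix.of_apply]
      by_cases h : dN i + eN i = N <;> simp [h] <;> rfl
    · intro k _ hk
      simp [Matrix.diagonal_apply_ne' _ hk]
    · intro h; exact absurd (Finset.mem_univ i) h
  -- the sup of the degree sums
  set S : ℕ := Finset.univ.sup (fun i => dN i + eN i) with hS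
  have huniv : (Finset.univ : Finset (Fin r)).Nonempty := ⟨⟨0, hr0⟩, Finset.mem_univ _⟩
  obtain ⟨i1, -, hi1⟩ := Finset.exists_mem_eq_sup Finset.univ huniv (fun i => dN i + eN i)
  have hinj : Function.Injective (hcMatrix L).mulVecLin := aux_inj _ hLred
  -- Case S > d is impossible
  have hSd : S ≤ d := by
    by_contra hc
    push_neg at hc
    have hzero : (Matrix.of (fun a b => (P a b).coeff S) : Matrix (Fin m) (Fin n) F) = 0 := by
      ext a b
      exact coeff_eq_zero_of_degree_lt (lt_of_le_of_lt (hdeg a b) (by exact_mod_cast hc))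
    have hid := key S (fun i => Finset.le_sup (f := fun i => dN i + eN i) (Finset.mem_univ i))
    rw [hzero] at hid
    set M : Matrix (Fin r) (Fin n) F :=
      Matrix.diagonal (fun i => if dN i + eN i = S then (1:F) else 0) * hrMatrix R with hM
    have h2 : hcMatrix L * M = 0 := by rw [hM, ← Matrix.mul_assoc, ← hid]
    have hM0 : M = 0 := by
      ext i j
      have h3 : (hcMatrix L).mulVecLin (M *ᵥ Pi.single j 1) = (hcMatrix L).mulVecLin 0 := by
        simp only [mulVecLin_apply, Matrix.mulVec_zero, Matrix.mulVec_mulVec, h2,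
          Matrix.zero_mulVec]
      have h4 := congrFun (hinj h3) i
      simpa [Matrix.mulVec_single] using h4
    obtain ⟨j, hj, -⟩ := hRlead i1
    have h5 := congrFun (congrFun hM0 i1) j
    rw [hM] at h5
    simp only [Matrix.diagonal_mul, Matrix.zero_apply] at h5
    rw [if_pos hi1.symm, one_mul] at h5
    exact hj (by simpa [hrMatrix] using h5)
  -- Main case : evaluate at N = d
  have hid := key d (fun i =>
    le_trans (Finset.le_sup (f := fun i => dN i + eN i) (Finset.mem_univ i)) hSd)
  set w : Fin r → F := fun i => if dN i + eN i = d then (1:F) else 0 with hw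
  have hrD : r ≤ (Matrix.diagonal w).rank := by
    calc r = (Matrix.of (fun a b => (P a b).coeff d) : Matrix (Fin m) (Fin n) F).rank := hinf.symm
      _ = (hcMatrix L * Matrix.diagonal w * hrMatrix R).rank := by rw [hid]
      _ ≤ (hcMatrix L * Matrix.diagonal w).rank := Matrix.rank_mul_le_left _ _
      _ ≤ (Matrix.diagonal w).rank := Matrix.rank_mul_le_right _ _
  have hall : ∀ i : Fin r, dN i + eN i = d := by
    by_contra hcon
    push_neg at hcon
    obtain ⟨i0, hi0⟩ := hcon
    have hwi0 : w i0 = 0 := by rw [hw]; simp [hi0]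
    have hcard : (Matrix.diagonal w).rank < r := by
      rw [Matrix.rank_diagonal]
      calc Fintype.card {i // w i ≠ 0} < Fintype.card (Fin r) :=
            Fintype.card_subtype_lt (x := i0) (by simp [hwi0])
        _ = r := Fintype.card_fin r
    omega
  have hD1 : Matrix.diagonal w = 1 := by
    rw [hw]
    have : (fun i => if dN i + eN i = d then (1:F) else 0) = fun _ => (1:F) := by
      funext i; rw [if_pos (hall i)]
    rw [this, Matrix.diagonal_one]
  rw [hD1, Matrix.mul_one] at hid
  have hRred : RowReduced R := by
    refine le_antisymm (Matrix.rank_le_height _) ?_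
    calc r = (Matrix.of (fun a b => (P a b).coeff d) : Matrix (Fin m) (Fin n) F).rank := hinf.symm
      _ = (hcMatrix L * hrMatrix R).rank := by rw [hid]
      _ ≤ (hrMatrix R).rank := Matrix.rank_mul_le_right _ _
  -- row space equality
  have hle : rowSpace P ≤ rowSpace R := by
    show LinearMap.range (toRat P)ᵀ.mulVecLin ≤ LinearMap.range (toRat R)ᵀ.mulVecLin
    rw [hP, aux_toRat_mul, Matrix.transpose_mul, Matrix.mulVecLin_mul]
    exact LinearMap.range_comp_le_range _ _
  have hfrP : Module.finrank (RatFunc F) (rowSpace P) = r := by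
    show (toRat P)ᵀ.rank = r
    rw [Matrix.rank_transpose]; exact hrank
  have hfrR : Module.finrank (RatFunc F) (rowSpace R) ≤ r := by
    show (toRat R)ᵀ.rank ≤ r
    rw [Matrix.rank_transpose]; exact Matrix.rank_le_height _
  have hspace : rowSpace R = rowSpace P :=
    (Submodule.eq_of_le_of_finrank_le hle (le_trans hfrR hfrP.ge)).symm
  refine ⟨⟨hRx, hRred⟩, hspace, fun i => ?_⟩
  -- degrees
  have hcd : colDeg L i = ((dN i : ℕ) : WithBot ℕ) := by
    obtain ⟨a, -, hadeg⟩ := hLlead i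
    refine le_antisymm (Finset.sup_le fun a' _ => ?_) ?_
    · exact le_trans (degree_le_natDegree) (by exact_mod_cast hdL a' i)
    · rw [← hadeg]
      exact Finset.le_sup (f := fun a' => (L a' i).degree) (Finset.mem_univ a)
  have hrd : rowDeg R i = ((eN i : ℕ) : WithBot ℕ) := by
    obtain ⟨b, -, hbdeg⟩ := hRlead i
    refine le_antisymm (Finset.sup_le fun b' _ => ?_) ?_
    · exact le_trans (degree_le_natDegree) (by exact_mod_cast hdR i b')
    · rw [← hbdeg]
      exact Finset.le_sup (f := fun b' => (R i b').degree) (Finset.mem_univ b)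
  rw [hcd, hrd, ← Nat.cast_add, hall i]

lemma aux_partIII {m n r d : ℕ}
    (P : Matrix (Fin m) (Fin n) F[X])
    (hdeg : ∀ i j, (P i j).degree ≤ (d : WithBot ℕ))
    (hrank : normalRank P = r) (hr0 : 0 < r)
    (hfin : ∀ x : AlgebraicClosure F, (evalMat P x).rank = r)
    (hinf : (Matrix.of (fun (i : Fin m) (j : Fin n) => (P i j).coeff d) :
        Matrix (Fin m) (Fin n) F).rank = r)
    (L : Matrix (Fin m) (Fin r) F[X]) (R : Matrix (Fin r) (Fin n) F[X])
    (hP : P = L * R)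
    (hR : IsMinimalRowBasis R) :
    IsMinimalColBasis L ∧ colSpace L = colSpace P ∧
    ∀ i : Fin r, colDeg L i + rowDeg R i = (d : WithBot ℕ) := by
  have hdeg' : ∀ i j, (Pᵀ i j).degree ≤ (d : WithBot ℕ) := fun i j => hdeg j i
  have hrank' : normalRank Pᵀ = r := by rw [aux_normalRank_transpose]; exact hrank
  have hfin' : ∀ x : AlgebraicClosure F, (evalMat Pᵀ x).rank = r := fun x => by
    rw [aux_evalMat_transpose, Matrix.rank_transpose]; exact hfin x
  have hinf' : (Matrix.of (fun (i : Fin n) (j : Fin m) => (Pᵀ i j).coeff d) :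
      Matrix (Fin n) (Fin m) F).rank = r := by
    have : (Matrix.of (fun (i : Fin n) (j : Fin m) => (Pᵀ i j).coeff d) :
        Matrix (Fin n) (Fin m) F) =
        (Matrix.of (fun (i : Fin m) (j : Fin n) => (P i j).coeff d) :
        Matrix (Fin m) (Fin n) F)ᵀ := rfl
    rw [this, Matrix.rank_transpose]; exact hinf
  have hP' : Pᵀ = Rᵀ * Lᵀ := by rw [hP, Matrix.transpose_mul]
  have hR' : IsMinimalColBasis Rᵀ := (aux_minRow_transpose R).mpr hR
  obtain ⟨h1, h2, h3⟩ := aux_partII Pᵀ hdeg' hrank' hr0 hfin' hinf' Rᵀ Lᵀ hP' hR'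
  refine ⟨?_, ?_, fun i => ?_⟩
  · have := (aux_minRow_transpose Lᵀ).mpr h1
    rwa [Matrix.transpose_transpose] at this
  · rw [aux_colSpace_transpose L, aux_colSpace_transpose P]; exact h2
  · rw [aux_colDeg_transpose L i, aux_rowDeg_transpose R i, add_comm]
    exact h3 i
/-- For a polynomial matrix of normal rank r > 0, degree exactly d, without finite or
infinite eigenvalues (with respect to grade d), every minimal rank factorization of the
three kinds has the stated extra minimality and degree-matching properties. -/
theorem minimal_rank_factorizations_no_eigenvalues
    {F : Type*} [Field F] {m n r d : ℕ}
    (P : Matrix (Fin m) (Fin n) F[X])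
    (hdeg : ∀ i j, (P i j).degree ≤ (d : WithBot ℕ))
    (hrank : normalRank P = r) (hr0 : 0 < r)
    (hdegex : matDeg P = (d : WithBot ℕ))
    (hfin : ∀ x : AlgebraicClosure F, (evalMat P x).rank = r)
    (hinf : (Matrix.of (fun (i : Fin m) (j : Fin n) => (P i j).coeff d) :
        Matrix (Fin m) (Fin n) F).rank = r) :
    (∀ (L : Matrix (Fin m) (Fin r) F[X]) (E : Matrix (Fin r) (Fin r) F[X])
        (R : Matrix (Fin r) (Fin n) F[X]),
      P = L * E * R →
      IsMinimalColBasis L → colSpace L = colSpace P →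
      IsMinimalRowBasis R → rowSpace R = rowSpace P →
        IsMinimalRowBasis (E * R) ∧ rowSpace (E * R) = rowSpace P ∧
        IsMinimalColBasis (L * E) ∧ colSpace (L * E) = colSpace P ∧
        (∀ i : Fin r, colDeg L i + rowDeg (E * R) i = (d : WithBot ℕ)) ∧
        (∀ i : Fin r, colDeg (L * E) i + rowDeg R i = (d : WithBot ℕ))) ∧
    (∀ (L : Matrix (Fin m) (Fin r) F[X]) (R : Matrix (Fin r) (Fin n) F[X]),
      P = L * R →
      IsMinimalColBasis L → colSpace L = colSpace P →
        IsMinimalRowBasis R ∧ rowSpace R = rowSpace P ∧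
        ∀ i : Fin r, colDeg L i + rowDeg R i = (d : WithBot ℕ)) ∧
    (∀ (L : Matrix (Fin m) (Fin r) F[X]) (R : Matrix (Fin r) (Fin n) F[X]),
      P = L * R →
      IsMinimalRowBasis R → rowSpace R = rowSpace P →
        IsMinimalColBasis L ∧ colSpace L = colSpace P ∧
        ∀ i : Fin r, colDeg L i + rowDeg R i = (d : WithBot ℕ)) := by
  
  refine ⟨?_, ?_, ?_⟩
  · intro L E R hP hL _ hR _
    have hP1 : P = L * (E * R) := by rw [hP, Matrix.mul_assoc]
    obtain ⟨h1, h2, h3⟩ := aux_partII P hdeg hrank hr0 hfin hinf L (E * R) hP1 hL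
    obtain ⟨h4, h5, h6⟩ := aux_partIII P hdeg hrank hr0 hfin hinf (L * E) R hP hR
    exact ⟨h1, h2, h4, h5, h3, h6⟩
  · intro L R hP hL _
    exact aux_partII P hdeg hrank hr0 hfin hinf L R hP hL
  · intro L R hP hR _
    exact aux_partIII P hdeg hrank hr0 hfin hinf L R hP hR
end
end
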